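/- arXiv:2103.03203 — 3 statements merged into one kernel-verified Lean document; each statement's English description precedes it below -/
import Mathlib

section
/- Let r > 0 and let β ∈ 𝒰^{m₂×m}[0,r] satisfy conditions (1.4), with block decomposition β = [β₁ β₂]. Then the m₂×m₂ matrix β₂(0) is invertible, and the matrix Φ₁(0) := β₂(0)^{-1} β₁(0) satisfies Φ₁(0) Φ₁(0)* = I_{m₂}. -/
open MeasureTheory Set Filter Complex Matrix

noncomputable section

/-- Lebesgue measure restricted to `(0, r]`. -/
def mu (r : ℝ) : Measure ℝ := volume.restrict (Ioc 0 r)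

/-- The Hilbert space `L²((0,r), ℂⁿ)`. -/
abbrev L2 (n : ℕ) (r : ℝ) := Lp (EuclideanSpace ℂ (Fin n)) 2 (mu r)

/-- The signature matrix `j = diag(I_{m₁}, -I_{m₂})`. -/
def sigJ (m₁ m₂ : ℕ) : Matrix (Fin m₁ ⊕ Fin m₂) (Fin m₁ ⊕ Fin m₂) ℂ :=
  Matrix.fromBlocks 1 0 0 (-1)

/-- `G` belongs to the class `𝒰^{p×q}[0,r]`, with first derivative `G'` and
second derivative `G''` (entrywise, `G'' ∈ L₂`). -/
def IsU (r : ℝ) {p q : Type*} [Fintype p] [Fintype q]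
    (G G' G'' : ℝ → Matrix p q ℂ) : Prop :=
  (∀ x ∈ Icc (0:ℝ) r, ∀ i k, HasDerivAt (fun y => G y i k) (G' x i k) x) ∧
  (∀ x ∈ Icc (0:ℝ) r, ∀ i k, G' x i k = G' 0 i k + ∫ t in (0:ℝ)..x, G'' t i k) ∧
  (∀ i k, MemLp (fun t => G'' t i k) 2 (mu r))

/-- Conditions (1.4): `β j β* ≡ 0` and `β' j β* ≡ i I` on `[0,r]`. -/
def Cond14 {m₁ m₂ : ℕ} (r : ℝ)
    (β β' : ℝ → Matrix (Fin m₂) (Fin m₁ ⊕ Fin m₂) ℂ) : Prop :=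
  ∀ x ∈ Icc (0:ℝ) r,
    β x * sigJ m₁ m₂ * (β x)ᴴ = 0 ∧
    β' x * sigJ m₁ m₂ * (β x)ᴴ = Complex.I • (1 : Matrix (Fin m₂) (Fin m₂) ℂ)

/-- `A` is the operator `(Af)(x) = ∫₀ˣ (t-x) f(t) dt` on `L²((0,r),ℂ^{m₂})`. -/
def IsOpA {m₂ : ℕ} (r : ℝ) (A : L2 m₂ r →L[ℂ] L2 m₂ r) : Prop :=
  ∀ f : L2 m₂ r, ∀ᵐ x ∂(mu r), ∀ i,
    A f x i = ∫ t in Ioc (0:ℝ) x, ((t : ℂ) - (x : ℂ)) * f t i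

/-- `K` is the operator `(Kf)(x) = i β(x) j ∫₀ˣ β(t)* f(t) dt` on `L²((0,r),ℂ^{m₂})`. -/
def IsOpK {m₁ m₂ : ℕ} (r : ℝ) (β : ℝ → Matrix (Fin m₂) (Fin m₁ ⊕ Fin m₂) ℂ)
    (K : L2 m₂ r →L[ℂ] L2 m₂ r) : Prop :=
  ∀ f : L2 m₂ r, ∀ᵐ x ∂(mu r), ∀ i,
    K f x i = Complex.I * ∑ k, (β x * sigJ m₁ m₂) i k *
      ∫ t in Ioc (0:ℝ) x, ∑ l, (starRingEnd ℂ) (β t l k) * f t l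

/-- The block `β₁(0)` of `β(0) = [β₁(0) β₂(0)]`. -/
def blkA {m₁ m₂ : ℕ} (β : ℝ → Matrix (Fin m₂) (Fin m₁ ⊕ Fin m₂) ℂ) :
    Matrix (Fin m₂) (Fin m₁) ℂ := Matrix.of fun i k => β 0 i (Sum.inl k)

/-- The block `β₂(0)` of `β(0) = [β₁(0) β₂(0)]`. -/
def blkB {m₁ m₂ : ℕ} (β : ℝ → Matrix (Fin m₂) (Fin m₁ ⊕ Fin m₂) ℂ) :
    Matrix (Fin m₂) (Fin m₂) ℂ := Matrix.of fun i k => β 0 i (Sum.inr k)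

lemma statement4_aux {m₁ m₂ : ℕ}
    (A : Matrix (Fin m₂) (Fin m₁) ℂ) (B : Matrix (Fin m₂) (Fin m₂) ℂ)
    (B0' : Matrix (Fin m₂) (Fin m₁ ⊕ Fin m₂) ℂ)
    (H1 : Matrix.fromCols A B * (Matrix.fromBlocks 1 0 0 (-1) : Matrix (Fin m₁ ⊕ Fin m₂) (Fin m₁ ⊕ Fin m₂) ℂ) *
          (Matrix.fromCols A B)ᴴ = 0)
    (H2 : B0' * (Matrix.fromBlocks 1 0 0 (-1) : Matrix (Fin m₁ ⊕ Fin m₂) (Fin m₁ ⊕ Fin m₂) ℂ) * (Matrix.fromCols A B)ᴴ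
          = Complex.I • (1 : Matrix (Fin m₂) (Fin m₂) ℂ)) :
    IsUnit B ∧ (B⁻¹ * A) * (B⁻¹ * A)ᴴ = 1 := by
  have hCT : (Matrix.fromCols A B)ᴴ = Matrix.fromRows Aᴴ Bᴴ := by
    ext (i|i) k <;> rfl
  rw [hCT] at H1 H2
  have h1 : A * Aᴴ = B * Bᴴ := by
    have h := H1
    rw [Matrix.fromCols_mul_fromBlocks, Matrix.fromCols_mul_fromRows] at h
    have h' : A * Aᴴ - B * Bᴴ = 0 := by
      simpa [Matrix.neg_mul, sub_eq_add_neg] using h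
    exact sub_eq_zero.mp h'
  have hinj : Function.Injective (Bᴴ).mulVec := by
    intro v w hvw
    suffices h : ∀ u : Fin m₂ → ℂ, Bᴴ.mulVec u = 0 → u = 0 by
      have := h (v - w) (by rw [Matrix.mulVec_sub, hvw, sub_self])
      exact sub_eq_zero.mp this
    intro u hu
    have hAu : Aᴴ.mulVec u = 0 := by
      have hq : star u ⬝ᵥ (A * Aᴴ).mulVec u = 0 := by
        rw [h1, ← Matrix.mulVec_mulVec, hu, Matrix.mulVec_zero, dotProduct_zero]
      rw [← Matrix.mulVec_mulVec, Matrix.dotProduct_mulVec,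
        show star u ᵥ* A = star (Aᴴ *ᵥ u) by
          rw [Matrix.star_mulVec, Matrix.conjTranspose_conjTranspose]] at hq
      set w := Aᴴ *ᵥ u with hw
      have h2 : ∑ j, (Complex.normSq (w j) : ℂ) = 0 := by
        simpa [dotProduct, Complex.normSq_eq_conj_mul_self] using hq
      have h3 : ∑ j, Complex.normSq (w j) = 0 := by exact_mod_cast h2
      funext i
      have := (Finset.sum_eq_zero_iff_of_nonneg
        (fun j _ => Complex.normSq_nonneg _)).mp h3 i (Finset.mem_univ i)
      simpa [Complex.normSq_eq_zero] using this
    have hfull : (Matrix.fromRows Aᴴ Bᴴ).mulVec u = 0 := by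
      rw [Matrix.fromRows_mulVec, hAu, hu]; ext (i|i) <;> rfl
    have := congrArg (fun M => M.mulVec u) H2
    simp only [Matrix.mul_assoc] at this
    rw [← Matrix.mulVec_mulVec, ← Matrix.mulVec_mulVec, hfull, Matrix.mulVec_zero,
      Matrix.mulVec_zero] at this
    rw [Matrix.smul_mulVec, Matrix.one_mulVec] at this
    have hz : Complex.I • u = 0 := this.symm
    simpa [smul_eq_zero, Complex.I_ne_zero] using hz
  have hUB : IsUnit B :=
    (Matrix.isUnit_conjTranspose B).mp (Matrix.mulVec_injective_iff_isUnit.mp hinj)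
  refine ⟨hUB, ?_⟩
  have hd : IsUnit B.det := (Matrix.isUnit_iff_isUnit_det B).mp hUB
  have hd' : IsUnit (Bᴴ).det := (Matrix.isUnit_iff_isUnit_det _).mp
    ((Matrix.isUnit_conjTranspose B).mpr hUB)
  calc (B⁻¹ * A) * (B⁻¹ * A)ᴴ
      = B⁻¹ * (A * Aᴴ) * (B⁻¹)ᴴ := by
        rw [Matrix.conjTranspose_mul]; simp only [Matrix.mul_assoc]
    _ = B⁻¹ * (B * Bᴴ) * (Bᴴ)⁻¹ := by rw [h1, Matrix.conjTranspose_nonsing_inv]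
    _ = (B⁻¹ * B) * (Bᴴ * (Bᴴ)⁻¹) := by
        simp only [Matrix.mul_assoc]
    _ = 1 := by rw [Matrix.nonsing_inv_mul B hd, Matrix.mul_nonsing_inv _ hd',
        Matrix.one_mul]

/-- `β₂(0)` is invertible and `Φ₁(0) = β₂(0)⁻¹β₁(0)` satisfies
`Φ₁(0)Φ₁(0)* = I_{m₂}`. -/
theorem statement4 {m₁ m₂ : ℕ} {r : ℝ} (hr : 0 < r)
    (β β' β'' : ℝ → Matrix (Fin m₂) (Fin m₁ ⊕ Fin m₂) ℂ)
    (hβU : IsU r β β' β'') (hβ14 : Cond14 r β β') :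
    IsUnit (blkB β) ∧
    ((blkB β)⁻¹ * blkA β) * ((blkB β)⁻¹ * blkA β)ᴴ = 1 := by
  obtain ⟨H1, H2⟩ := hβ14 0 ⟨le_refl 0, hr.le⟩
  have hsplit : β 0 = Matrix.fromCols (blkA β) (blkB β) := by
    ext i (k|k) <;> rfl
  have hJ : sigJ m₁ m₂ = Matrix.fromBlocks 1 0 0 (-1) := rfl
  rw [hsplit, hJ] at H1 H2
  exact statement4_aux (blkA β) (blkB β) (β' 0) H1 H2
end
end

section
/- Let r > 0 and let v₀ ∈ L₂^{m₂×m₂}(0,2r). Define the operator S₀ on L₂^{m₂}(0,r) by (S₀f)(x) = ∫₀^r v₀(x+t) f(t) dt. Then S₀ satisfies the operator identity 𝒜S₀ + S₀𝒜* = i M, where (Mf)(x) = ∫₀^r ( ∫_t^x v₀(s) ds ) f(t) dt. -/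
open MeasureTheory Set Filter Complex Matrix

noncomputable section

namespace St16


lemma finite_restrict (a b : ℝ) : IsFiniteMeasure (volume.restrict (Ioc a b)) :=
  ⟨by rw [Measure.restrict_apply_univ, Real.volume_Ioc]; exact ENNReal.ofReal_lt_top⟩

lemma shear_null {N : Set ℝ} (hN : MeasurableSet N) (h0 : volume N = 0) (A B : Set ℝ) :
    ((volume.restrict A).prod (volume.restrict B)) {p : ℝ × ℝ | p.1 + p.2 ∈ N} = 0 := by
  have hm : MeasurableSet {p : ℝ × ℝ | p.1 + p.2 ∈ N} :=
    (measurable_fst.add measurable_snd) hN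
  have h1 : (volume.prod volume : Measure (ℝ × ℝ)) {p : ℝ × ℝ | p.1 + p.2 ∈ N} = 0 := by
    rw [Measure.measure_prod_null hm]
    refine Eventually.of_forall fun x => ?_
    show volume (Prod.mk x ⁻¹' {p : ℝ × ℝ | p.1 + p.2 ∈ N}) = 0
    have h2 : (Prod.mk x ⁻¹' {p : ℝ × ℝ | p.1 + p.2 ∈ N}) = (fun y => x + y) ⁻¹' N := rfl
    rw [h2, measure_preimage_add]
    exact h0
  rw [Measure.prod_restrict]
  exact le_antisymm (le_trans (Measure.restrict_apply_le _ _) h1.le) zero_le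

variable {E : Type*} [NormedAddCommGroup E] [NormedSpace ℝ E]

lemma integrableOn_comp_add {g : ℝ → E} {s a b : ℝ}
    (h : IntegrableOn g (Ioc (a + s) (b + s)) volume) :
    IntegrableOn (fun t => g (t + s)) (Ioc a b) volume := by
  rcases le_or_gt a b with hab | hab
  · have h1 : IntervalIntegrable g volume (a + s) (b + s) :=
      (intervalIntegrable_iff_integrableOn_Ioc_of_le (by linarith)).2 h
    have h2 := h1.comp_add_right s
    exact (intervalIntegrable_iff_integrableOn_Ioc_of_le hab).1 (by simpa using h2)
  · simp [Ioc_eq_empty (not_lt.mpr hab.le), integrableOn_empty]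

lemma setIntegral_comp_add {g : ℝ → E} {s a b : ℝ} (hab : a ≤ b) :
    ∫ t in Ioc a b, g (t + s) = ∫ u in Ioc (a + s) (b + s), g u := by
  rw [← intervalIntegral.integral_of_le hab, ← intervalIntegral.integral_of_le (by linarith),
    intervalIntegral.integral_comp_add_right]

lemma fubini_tri {r : ℝ} {a b : ℝ → ℂ} (ha : StronglyMeasurable a) (hb : StronglyMeasurable b)
    (hai : IntegrableOn a (Ioc 0 r) volume) (hbi : IntegrableOn b (Ioc 0 r) volume) :
    ∫ x in Ioc 0 r, (∫ t in Ioc 0 x, a t) * b x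
      = ∫ t in Ioc 0 r, a t * ∫ s in Ioc t r, b s := by
  set μ := volume.restrict (Ioc (0:ℝ) r) with hμ
  set F : ℝ → ℝ → ℂ := fun x t => if t ≤ x then a t * b x else 0 with hF
  have hFeq : Function.uncurry F = {p : ℝ × ℝ | p.2 ≤ p.1}.indicator
      (fun p => a p.2 * b p.1) := by
    ext p; simp [Function.uncurry, hF, Set.indicator_apply, mem_setOf_eq]
  have hFm : StronglyMeasurable (Function.uncurry F) := by
    rw [hFeq]
    exact ((ha.comp_measurable measurable_snd).mul
      (hb.comp_measurable measurable_fst)).indicator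
      (measurableSet_le measurable_snd measurable_fst)
  have hFi : Integrable (Function.uncurry F) (μ.prod μ) := by
    have hdom : Integrable (fun p : ℝ × ℝ => b p.1 * a p.2) (μ.prod μ) := hbi.mul_prod hai
    refine hdom.norm.mono' hFm.aestronglyMeasurable (Eventually.of_forall fun p => ?_)
    by_cases h : p.2 ≤ p.1
    · simp only [Function.uncurry, hF, if_pos h, norm_norm, norm_mul]
      exact le_of_eq (mul_comm _ _)
    · simp only [Function.uncurry, hF, if_neg h, norm_zero, norm_norm, norm_mul]
      positivity
  have claim1 : ∀ x ∈ Ioc (0:ℝ) r, ∫ t, F x t ∂μ = (∫ t in Ioc 0 x, a t) * b x := by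
    intro x hx
    have h1 : ∀ t, F x t = (Iic x).indicator (fun t => a t * b x) t := by
      intro t; simp [hF, Set.indicator_apply]
    rw [integral_congr_ae (Eventually.of_forall h1), hμ, setIntegral_indicator measurableSet_Iic]
    have h2 : Ioc (0:ℝ) r ∩ Iic x = Ioc 0 x := by
      ext t; simp only [mem_inter_iff, mem_Ioc, mem_Iic]
      exact ⟨fun h => ⟨h.1.1, h.2⟩, fun h => ⟨⟨h.1, le_trans h.2 hx.2⟩, h.2⟩⟩
    rw [h2, integral_mul_const]
  have claim2 : ∀ t ∈ Ioc (0:ℝ) r, ∫ x, F x t ∂μ = a t * ∫ s in Ioc t r, b s := by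
    intro t ht
    have h1 : ∀ x, F x t = (Ici t).indicator (fun x => a t * b x) x := by
      intro x; simp [hF, Set.indicator_apply]
    rw [integral_congr_ae (Eventually.of_forall h1), hμ, setIntegral_indicator measurableSet_Ici]
    have h2 : Ioc (0:ℝ) r ∩ Ici t = Icc t r := by
      ext x; simp only [mem_inter_iff, mem_Ioc, mem_Icc, mem_Ici]
      exact ⟨fun h => ⟨h.2, h.1.2⟩, fun h => ⟨⟨lt_of_lt_of_le ht.1 h.1, h.2⟩, h.1⟩⟩
    rw [h2, integral_const_mul, integral_Icc_eq_integral_Ioc]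
  calc ∫ x in Ioc 0 r, (∫ t in Ioc 0 x, a t) * b x
      = ∫ x, (∫ t, F x t ∂μ) ∂μ := by
        refine (setIntegral_congr_fun measurableSet_Ioc fun x hx => ?_).symm
        exact claim1 x hx
    _ = ∫ t, (∫ x, F x t ∂μ) ∂μ := integral_integral_swap hFi
    _ = ∫ t in Ioc 0 r, a t * ∫ s in Ioc t r, b s := by
        refine setIntegral_congr_fun measurableSet_Ioc fun t ht => ?_
        exact claim2 t ht



lemma coord_sm {m₂ : ℕ} {r : ℝ} (f : L2 m₂ r) (k : Fin m₂) :
    StronglyMeasurable (fun t => f t k) :=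
  (continuous_apply k).comp_stronglyMeasurable
    ((PiLp.continuous_ofLp 2 _).comp_stronglyMeasurable (Lp.stronglyMeasurable f))

lemma coord_int {m₂ : ℕ} {r : ℝ} (f : L2 m₂ r) (k : Fin m₂) :
    Integrable (fun t => f t k) (volume.restrict (Ioc 0 r)) := by
  haveI : IsFiniteMeasure (volume.restrict (Ioc (0:ℝ) r)) := finite_restrict 0 r
  haveI : IsFiniteMeasure (mu r) := finite_restrict 0 r
  have h := (EuclideanSpace.proj (𝕜 := ℂ) k).comp_memLp' (Lp.memLp f)
  have h2 : MemLp (fun t => f t k) 2 (mu r) := h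
  exact h2.integrable one_le_two

lemma adjoint_formula {m₂ : ℕ} {r : ℝ} (hr : 0 < r) (𝒜 : L2 m₂ r →L[ℂ] L2 m₂ r)
    (h𝒜 : ∀ u : L2 m₂ r, ∀ᵐ x ∂(mu r), ∀ i,
      𝒜 u x i = Complex.I * ∫ t in Ioc (0:ℝ) x, u t i)
    (f : L2 m₂ r) :
    ∀ᵐ t ∂(mu r), ∀ k,
      (ContinuousLinearMap.adjoint 𝒜 f) t k = -Complex.I * ∫ s in Ioc t r, f s k := by
  haveI : IsFiniteMeasure (mu r) := finite_restrict 0 r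
  have hμdef : mu r = volume.restrict (Ioc (0:ℝ) r) := rfl
  -- the candidate adjoint value, defined with an indicator so that it is measurable everywhere
  set H : ℝ → Fin m₂ → ℂ := fun t k =>
    -Complex.I * ∫ s, (Ioi t).indicator (fun s => f s k) s ∂(mu r) with hH
  set G : ℝ → EuclideanSpace ℂ (Fin m₂) :=
    fun t => (EuclideanSpace.equiv (Fin m₂) ℂ).symm (H t) with hG
  have hGk : ∀ t k, G t k = H t k := fun t k => rfl
  -- strong measurability of the inner-integral functions
  have hpsi : ∀ (v : L2 m₂ r) (k : Fin m₂), StronglyMeasurable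
      (fun t => ∫ s, (Ioi t).indicator (fun s => v s k) s ∂(mu r)) := by
    intro v k
    have h1 : StronglyMeasurable (fun p : ℝ × ℝ =>
        {q : ℝ × ℝ | q.1 < q.2}.indicator (fun q => v q.2 k) p) :=
      ((coord_sm v k).comp_measurable measurable_snd).indicator
        (measurableSet_lt measurable_fst measurable_snd)
    have h2 := h1.integral_prod_right' (ν := mu r)
    have h3 : (fun t => ∫ s, (Ioi t).indicator (fun s => v s k) s ∂(mu r))
        = fun t => ∫ s, {q : ℝ × ℝ | q.1 < q.2}.indicator
            (fun q => v q.2 k) (t, s) ∂(mu r) := by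
      funext t
      have : (fun s => (Ioi t).indicator (fun s => v s k) s)
          = fun s => {q : ℝ × ℝ | q.1 < q.2}.indicator (fun q => v q.2 k) (t, s) := by
        funext s; simp [Set.indicator_apply, mem_Ioi, mem_setOf_eq]
      simp only [this]
    rw [h3]
    exact h2
  have hpsib : ∀ (v : L2 m₂ r) (t : ℝ) (k : Fin m₂),
      ‖∫ s, (Ioi t).indicator (fun s => v s k) s ∂(mu r)‖ ≤ ∫ s, ‖v s k‖ ∂(mu r) := by
    intro v t k
    refine le_trans (norm_integral_le_integral_norm _) ?_
    refine integral_mono ((coord_int v k).indicator measurableSet_Ioi).norm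
      (coord_int v k).norm (fun s => ?_)
    exact norm_indicator_le_norm_self _ _
  have hind : ∀ (v : L2 m₂ r), ∀ t ∈ Ioc (0:ℝ) r, ∀ k,
      (∫ s, (Ioi t).indicator (fun s => v s k) s ∂(mu r)) = ∫ s in Ioc t r, v s k := by
    intro v t hmem k
    show (∫ s in Ioc (0:ℝ) r, (Ioi t).indicator (fun s => v s k) s) = ∫ s in Ioc t r, v s k
    rw [setIntegral_indicator measurableSet_Ioi]
    have hset : Ioc (0:ℝ) r ∩ Ioi t = Ioc t r := by
      ext s; simp only [mem_inter_iff, mem_Ioc, mem_Ioi]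
      exact ⟨fun h => ⟨h.2, h.1.2⟩, fun h => ⟨⟨lt_trans hmem.1 h.1, h.2⟩, h.1⟩⟩
    rw [hset]
  have hHm : ∀ k, StronglyMeasurable (fun t => H t k) := by
    intro k
    have : (fun t => H t k)
        = fun t => -Complex.I * ∫ s, (Ioi t).indicator (fun s => f s k) s ∂(mu r) := rfl
    rw [this]
    exact stronglyMeasurable_const.mul (hpsi f k)
  have hGm : StronglyMeasurable G := by
    have hHm' : Measurable H := by
      rw [measurable_pi_iff]; intro k; exact (hHm k).measurable
    exact ((EuclideanSpace.equiv (Fin m₂) ℂ).symm.continuous.comp_stronglyMeasurable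
      hHm'.stronglyMeasurable)
  -- bound
  have hbound : ∀ t k, ‖H t k‖ ≤ ∫ s, ‖f s k‖ ∂(mu r) := by
    intro t k
    rw [hH]
    simp only [norm_mul, norm_neg, Complex.norm_I, one_mul]
    exact hpsib f t k
  have hGb : ∀ t, ‖G t‖ ≤ Real.sqrt (∑ k, (∫ s, ‖f s k‖ ∂(mu r)) ^ 2) := by
    intro t
    rw [EuclideanSpace.norm_eq]
    refine Real.sqrt_le_sqrt (Finset.sum_le_sum fun k _ => ?_)
    have := hbound t k
    have h0 : (0:ℝ) ≤ ‖H t k‖ := norm_nonneg _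
    calc ‖G t k‖ ^ 2 = ‖H t k‖ ^ 2 := by rw [hGk]
      _ ≤ (∫ s, ‖f s k‖ ∂(mu r)) ^ 2 := by
          exact pow_le_pow_left₀ h0 this 2
  have hGmem : MemLp G 2 (mu r) :=
    MemLp.of_bound hGm.aestronglyMeasurable _ (Eventually.of_forall hGb)
  set g0 : L2 m₂ r := hGmem.toLp G with hg0
  -- inner product identity
  have hinner : ∀ u : L2 m₂ r, (inner ℂ (𝒜 u) f : ℂ) = inner ℂ u g0 := by
    intro u
    have hg0c : (g0 : ℝ → EuclideanSpace ℂ (Fin m₂)) =ᵐ[mu r] G := hGmem.coeFn_toLp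
    rw [L2.inner_def, L2.inner_def]
    set cu : Fin m₂ → ℝ → ℂ := fun i t => (starRingEnd ℂ) (u t i) with hcu
    have hcusm : ∀ i, StronglyMeasurable (cu i) := fun i =>
      continuous_star.comp_stronglyMeasurable (coord_sm u i)
    have hcuint : ∀ i, Integrable (cu i) (mu r) := by
      intro i
      refine (coord_int u i).norm.mono' (hcusm i).aestronglyMeasurable ?_
      exact Eventually.of_forall fun t => by simp [hcu]
    have hphi : ∀ i, StronglyMeasurable (fun x => ∫ t, (Iic x).indicator (cu i) t ∂(mu r)) := by
      intro i
      have h1 : StronglyMeasurable (fun p : ℝ × ℝ =>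
          {q : ℝ × ℝ | q.2 ≤ q.1}.indicator (fun q => cu i q.2) p) :=
        ((hcusm i).comp_measurable measurable_snd).indicator
          (measurableSet_le measurable_snd measurable_fst)
      have h2 := h1.integral_prod_right' (ν := mu r)
      have h3 : (fun x => ∫ t, (Iic x).indicator (cu i) t ∂(mu r))
          = fun x => ∫ t, {q : ℝ × ℝ | q.2 ≤ q.1}.indicator (fun q => cu i q.2) (x, t) ∂(mu r) := by
        funext x
        have : (fun t => (Iic x).indicator (cu i) t)
            = fun t => {q : ℝ × ℝ | q.2 ≤ q.1}.indicator (fun q => cu i q.2) (x, t) := by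
          funext t; simp [Set.indicator_apply, mem_Iic, mem_setOf_eq]
        simp only [this]
      rw [h3]; exact h2
    have hiic : ∀ x ∈ Ioc (0:ℝ) r, ∀ i,
        (∫ t, (Iic x).indicator (cu i) t ∂(mu r)) = ∫ t in Ioc 0 x, cu i t := by
      intro x hx i
      show (∫ t in Ioc (0:ℝ) r, (Iic x).indicator (cu i) t) = ∫ t in Ioc 0 x, cu i t
      rw [setIntegral_indicator measurableSet_Iic]
      have hset : Ioc (0:ℝ) r ∩ Iic x = Ioc 0 x := by
        ext t; simp only [mem_inter_iff, mem_Ioc, mem_Iic]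
        exact ⟨fun h => ⟨h.1.1, h.2⟩, fun h => ⟨⟨h.1, le_trans h.2 hx.2⟩, h.2⟩⟩
      rw [hset]
    set p : Fin m₂ → ℝ → ℂ := fun i x => (∫ t in Ioc 0 x, cu i t) * f x i with hp
    set q : Fin m₂ → ℝ → ℂ := fun i x =>
      cu i x * ∫ s, (Ioi x).indicator (fun s => f s i) s ∂(mu r) with hq
    have hpint : ∀ i, Integrable (p i) (mu r) := by
      intro i
      refine Integrable.mono' ((coord_int f i).norm.const_mul (∫ t, ‖cu i t‖ ∂(mu r))) ?_ ?_
      · refine AEStronglyMeasurable.congr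
          (((hphi i).mul (coord_sm f i)).aestronglyMeasurable) ?_
        refine (ae_restrict_mem measurableSet_Ioc).mono fun x hx => ?_
        show (∫ t, (Iic x).indicator (cu i) t ∂(mu r)) * f x i = p i x
        rw [hp, hiic x hx i]
      · refine (ae_restrict_mem measurableSet_Ioc).mono fun x hx => ?_
        show ‖p i x‖ ≤ (∫ t, ‖cu i t‖ ∂(mu r)) * ‖f x i‖
        rw [hp, norm_mul]
        refine mul_le_mul_of_nonneg_right ?_ (norm_nonneg _)
        refine le_trans (norm_integral_le_integral_norm _) ?_
        show _ ≤ ∫ t in Ioc (0:ℝ) r, ‖cu i t‖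
        refine setIntegral_mono_set (hcuint i).norm ?_ ?_
        · exact Eventually.of_forall fun t => norm_nonneg _
        · exact HasSubset.Subset.eventuallyLE (Ioc_subset_Ioc_right hx.2)
    have hqint : ∀ i, Integrable (q i) (mu r) := by
      intro i
      refine Integrable.mono' ((coord_int u i).norm.mul_const (∫ s, ‖f s i‖ ∂(mu r))) ?_ ?_
      · exact ((hcusm i).mul (hpsi f i)).aestronglyMeasurable
      · refine Eventually.of_forall fun x => ?_
        show ‖q i x‖ ≤ ‖u x i‖ * ∫ s, ‖f s i‖ ∂(mu r)
        rw [hq, norm_mul]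
        have h1 : ‖cu i x‖ = ‖u x i‖ := by simp [hcu]
        rw [h1]
        exact mul_le_mul_of_nonneg_left (hpsib f x i) (norm_nonneg _)
    have key : ∀ i, ∫ x, p i x ∂(mu r) = ∫ x, q i x ∂(mu r) := by
      intro i
      have h1 : ∫ x, p i x ∂(mu r) = ∫ t in Ioc 0 r, cu i t * ∫ s in Ioc t r, f s i :=
        fubini_tri (hcusm i) (coord_sm f i) (hcuint i) (coord_int f i)
      have h2 : ∫ x, q i x ∂(mu r) = ∫ t in Ioc 0 r, cu i t * ∫ s in Ioc t r, f s i := by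
        refine setIntegral_congr_fun measurableSet_Ioc fun x hx => ?_
        show cu i x * (∫ s, (Ioi x).indicator (fun s => f s i) s ∂(mu r)) = _
        rw [hind f x hx i]
      rw [h1, h2]
    have hLHS : ∫ x, (inner ℂ ((𝒜 u) x) (f x) : ℂ) ∂(mu r) = ∑ i, -Complex.I * ∫ x, p i x ∂(mu r) := by
      have step1 : ∫ x, (inner ℂ ((𝒜 u) x) (f x) : ℂ) ∂(mu r)
          = ∫ x, (∑ i, -Complex.I * p i x) ∂(mu r) := by
        refine integral_congr_ae ?_
        filter_upwards [h𝒜 u] with x hx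
        rw [PiLp.inner_apply]
        refine Finset.sum_congr rfl fun i _ => ?_
        rw [RCLike.inner_apply', hx i]
        show _ = -Complex.I * ((∫ t in Ioc 0 x, cu i t) * f x i)
        have hconj : (∫ t in Ioc 0 x, cu i t) = (starRingEnd ℂ) (∫ t in Ioc 0 x, u t i) :=
          integral_conj
        rw [_root_.map_mul, Complex.conj_I, hconj]
        ring
      rw [step1, integral_finset_sum _ (fun i _ => (hpint i).const_mul _)]
      exact Finset.sum_congr rfl fun i _ => integral_const_mul _ _
    have hRHS : ∫ x, (inner ℂ (u x) (g0 x) : ℂ) ∂(mu r) = ∑ i, -Complex.I * ∫ x, q i x ∂(mu r) := by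
      have step1 : ∫ x, (inner ℂ (u x) (g0 x) : ℂ) ∂(mu r)
          = ∫ x, (∑ i, -Complex.I * q i x) ∂(mu r) := by
        refine integral_congr_ae ?_
        filter_upwards [hg0c] with x hx
        rw [hx, PiLp.inner_apply]
        refine Finset.sum_congr rfl fun i _ => ?_
        rw [RCLike.inner_apply', hGk]
        show (starRingEnd ℂ) (u x i)
            * (-Complex.I * ∫ s, (Ioi x).indicator (fun s => f s i) s ∂(mu r))
          = -Complex.I * (cu i x * ∫ s, (Ioi x).indicator (fun s => f s i) s ∂(mu r))
        ring
      rw [step1, integral_finset_sum _ (fun i _ => (hqint i).const_mul _)]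
      exact Finset.sum_congr rfl fun i _ => integral_const_mul _ _
    rw [hLHS, hRHS]
    exact Finset.sum_congr rfl fun i _ => by rw [key i]
  have hadj : ContinuousLinearMap.adjoint 𝒜 f = g0 := by
    refine ext_inner_left ℂ fun u => ?_
    rw [ContinuousLinearMap.adjoint_inner_right]
    exact hinner u
  have hcoe : (ContinuousLinearMap.adjoint 𝒜 f : ℝ → EuclideanSpace ℂ (Fin m₂)) =ᵐ[mu r] G := by
    rw [hadj]; exact hGmem.coeFn_toLp
  filter_upwards [hcoe, ae_restrict_mem measurableSet_Ioc] with t ht hmem k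
  rw [ht, hGk]
  show -Complex.I * (∫ s, (Ioi t).indicator (fun s => f s k) s ∂(mu r)) = _
  rw [hind f t hmem k]


end St16

set_option maxHeartbeats 3000000

/-- Example 4.7: the Hankel-type operator
`(S₀f)(x) = ∫₀ʳ v₀(x+t) f(t) dt` satisfies
`𝒜S₀ + S₀𝒜* = i∫₀ʳ (∫_t^x v₀(s) ds) · dt`. -/
theorem statement16 {m₂ : ℕ} {r : ℝ} (hr : 0 < r)
    (v0 : ℝ → Matrix (Fin m₂) (Fin m₂) ℂ)
    (hv0 : ∀ i k, MemLp (fun t => v0 t i k) 2 (volume.restrict (Ioc (0:ℝ) (2*r))))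
    (𝒜 S0 M : L2 m₂ r →L[ℂ] L2 m₂ r)
    (h𝒜 : ∀ f : L2 m₂ r, ∀ᵐ x ∂(mu r), ∀ i,
      𝒜 f x i = Complex.I * ∫ t in Ioc (0:ℝ) x, f t i)
    (hS0 : ∀ f : L2 m₂ r, ∀ᵐ x ∂(mu r), ∀ i,
      S0 f x i = ∫ t in Ioc (0:ℝ) r, ∑ k, v0 (x + t) i k * f t k)
    (hM : ∀ f : L2 m₂ r, ∀ᵐ x ∂(mu r), ∀ i,
      M f x i = ∫ t in Ioc (0:ℝ) r, ∑ k, (∫ s in t..x, v0 s i k) * f t k) :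
    𝒜.comp S0 + S0.comp (ContinuousLinearMap.adjoint 𝒜) = Complex.I • M := by
  classical
  haveI hfin : IsFiniteMeasure (mu r) := St16.finite_restrict 0 r
  haveI hfin2 : IsFiniteMeasure (volume.restrict (Ioc (0:ℝ) (2*r))) :=
    St16.finite_restrict 0 (2*r)
  -- measurable representative of v0
  set g : Fin m₂ → Fin m₂ → ℝ → ℂ :=
    fun i k => ((hv0 i k).aestronglyMeasurable).mk _ with hgdef
  have hgsm : ∀ i k, StronglyMeasurable (g i k) :=
    fun i k => (hv0 i k).aestronglyMeasurable.stronglyMeasurable_mk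
  have hgae : ∀ i k, (fun t => v0 t i k) =ᵐ[volume.restrict (Ioc (0:ℝ) (2*r))] g i k :=
    fun i k => (hv0 i k).aestronglyMeasurable.ae_eq_mk
  have hgint : ∀ i k, IntegrableOn (g i k) (Ioc (0:ℝ) (2*r)) volume := by
    intro i k
    have h1 : Integrable (fun t => v0 t i k) (volume.restrict (Ioc (0:ℝ) (2*r))) :=
      (hv0 i k).integrable one_le_two
    exact h1.congr (hgae i k)
  -- null sets where v0 and g differ
  have hD0 : ∀ i k, volume ({t : ℝ | v0 t i k ≠ g i k t} ∩ Ioc 0 (2*r)) = 0 := by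
    intro i k
    have h2 := hgae i k
    rw [EventuallyEq, ae_iff] at h2
    rw [Measure.restrict_apply' measurableSet_Ioc] at h2
    exact h2
  have hN : ∃ N : Set ℝ, MeasurableSet N ∧ volume N = 0 ∧
      ∀ u ∈ Ioc (0:ℝ) (2*r), u ∉ N → ∀ i k, v0 u i k = g i k u := by
    have h1 : ∀ i k, ∃ N : Set ℝ, MeasurableSet N ∧ volume N = 0 ∧
        ∀ u ∈ Ioc (0:ℝ) (2*r), u ∉ N → v0 u i k = g i k u := by
      intro i k
      refine ⟨toMeasurable volume ({t : ℝ | v0 t i k ≠ g i k t} ∩ Ioc 0 (2*r)),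
        measurableSet_toMeasurable _ _, by rw [measure_toMeasurable]; exact hD0 i k, ?_⟩
      intro u hu hnot
      by_contra hne
      exact hnot (subset_toMeasurable _ _ ⟨hne, hu⟩)
    choose N hNm hN0 hNe using h1
    refine ⟨⋃ i, ⋃ k, N i k,
      MeasurableSet.iUnion (fun i => MeasurableSet.iUnion fun k => hNm i k),
      measure_iUnion_null fun i => measure_iUnion_null fun k => hN0 i k, ?_⟩
    intro u hu hnot i k
    exact hNe i k u hu (fun hmem => hnot (mem_iUnion.2 ⟨i, mem_iUnion.2 ⟨k, hmem⟩⟩))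
  obtain ⟨N, hNm, hN0, hNP⟩ := hN
  apply ContinuousLinearMap.ext
  intro f
  have hadj := St16.adjoint_formula hr 𝒜 h𝒜 f
  set ad : L2 m₂ r := ContinuousLinearMap.adjoint 𝒜 f with had
  -- main pointwise computation
  have main : ∀ x ∈ Ioc (0:ℝ) r, ∀ i : Fin m₂,
      Complex.I * (∫ t in Ioc (0:ℝ) x, (S0 f) t i)
        + (∫ t in Ioc (0:ℝ) r, ∑ k, v0 (x + t) i k * (ad t k))
      = Complex.I * ∫ t in Ioc (0:ℝ) r, ∑ k, (∫ s in t..x, v0 s i k) * f t k := by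
    intro x hx i
    have hx0 : 0 < x := hx.1
    have hxr : x ≤ r := hx.2
    -- kernels
    set F : ℝ × ℝ → ℂ := fun p => ∑ k, g i k (p.1 + p.2) * f p.2 k with hFdef
    set F2 : ℝ × ℝ → ℂ := fun p => ∑ k, g i k (x + p.1) *
      ({q : ℝ × ℝ | q.1 < q.2}.indicator (fun q => f q.2 k) p) with hF2def
    have hindeq : ∀ (t s : ℝ) (k : Fin m₂),
        {q : ℝ × ℝ | q.1 < q.2}.indicator (fun q => f q.2 k) (t, s)
          = (Ioi t).indicator (fun s => f s k) s := by
      intro t s k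
      by_cases h : t < s <;> simp [Set.indicator_apply, mem_setOf_eq, mem_Ioi, h]
    have hFsm : StronglyMeasurable F := by
      refine Measurable.stronglyMeasurable ?_
      refine Finset.measurable_sum _ fun k _ => ?_
      exact (((hgsm i k).measurable).comp (measurable_fst.add measurable_snd)).mul
        (((St16.coord_sm f k).measurable).comp measurable_snd)
    have hF2sm : StronglyMeasurable F2 := by
      refine Measurable.stronglyMeasurable ?_
      refine Finset.measurable_sum _ fun k _ => ?_
      refine (((hgsm i k).measurable).comp (measurable_fst.const_add x)).mul ?_
      refine Measurable.indicator ?_ (measurableSet_lt measurable_fst measurable_snd)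
      exact ((St16.coord_sm f k).measurable).comp measurable_snd
    -- translation-integrability of sections
    have hsection : ∀ s ∈ Ioc (0:ℝ) r, ∀ k,
        IntegrableOn (fun t => g i k (t + s)) (Ioc 0 x) volume := by
      intro s hs k
      refine St16.integrableOn_comp_add ((hgint i k).mono_set ?_)
      intro u hu
      exact ⟨by linarith [hs.1, hu.1], by linarith [hu.2, hs.2, hxr]⟩
    have htrans2 : ∀ k, IntegrableOn (fun t => g i k (x + t)) (Ioc 0 r) volume := by
      intro k
      have h1 : IntegrableOn (fun t => g i k (t + x)) (Ioc 0 r) volume := by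
        refine St16.integrableOn_comp_add ((hgint i k).mono_set ?_)
        intro u hu
        exact ⟨by linarith [hu.1, hx0], by linarith [hu.2, hxr]⟩
      refine h1.congr_fun (fun t _ => ?_) measurableSet_Ioc
      show g i k (t + x) = g i k (x + t)
      rw [add_comm]
    -- integrability of F on the product
    have hFint : Integrable F
        ((volume.restrict (Ioc (0:ℝ) x)).prod (volume.restrict (Ioc (0:ℝ) r))) := by
      refine (integrable_prod_iff' hFsm.aestronglyMeasurable).2 ⟨?_, ?_⟩
      · refine (ae_restrict_mem measurableSet_Ioc).mono fun s hs => ?_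
        have heq2 : (fun t => F (t, s)) = fun t => ∑ k, g i k (t + s) * f s k := rfl
        rw [heq2]
        exact integrable_finset_sum _ fun k _ => ((hsection s hs k).mul_const _)
      · have hbnd : Integrable
            (fun s => ∑ k, (∫ u in Ioc (0:ℝ) (2*r), ‖g i k u‖) * ‖f s k‖)
            (volume.restrict (Ioc (0:ℝ) r)) :=
          integrable_finset_sum _ fun k _ => ((St16.coord_int f k).norm.const_mul _)
        refine hbnd.mono' (hFsm.norm.integral_prod_left').aestronglyMeasurable ?_
        refine (ae_restrict_mem measurableSet_Ioc).mono fun s hs => ?_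
        have hsecint : ∀ k : Fin m₂,
            IntegrableOn (fun t => ‖g i k (t + s)‖ * ‖f s k‖) (Ioc 0 x) volume :=
          fun k => ((hsection s hs k).norm.mul_const _)
        have h0 : ∀ t, ‖F (t, s)‖ ≤ ∑ k, ‖g i k (t + s)‖ * ‖f s k‖ := by
          intro t
          refine le_trans (norm_sum_le _ _) ?_
          refine Finset.sum_le_sum fun k _ => ?_
          rw [norm_mul]
        have hInt2 : Integrable (fun t => ∑ k, ‖g i k (t + s)‖ * ‖f s k‖)
            (volume.restrict (Ioc (0:ℝ) x)) :=
          integrable_finset_sum _ fun k _ => hsecint k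
        have hInt1 : Integrable (fun t => ‖F (t, s)‖) (volume.restrict (Ioc (0:ℝ) x)) := by
          have heq2 : (fun t => F (t, s)) = fun t => ∑ k, g i k (t + s) * f s k := rfl
          have := (integrable_finset_sum (μ := volume.restrict (Ioc (0:ℝ) x)) Finset.univ
            (fun k _ => ((hsection s hs k).mul_const (f s k)))).norm
          exact this.congr (Eventually.of_forall fun t =>
            (congrArg norm (congrFun heq2 t)).symm)
        have h1 : (∫ t in Ioc (0:ℝ) x, ‖F (t, s)‖)
            ≤ ∫ t in Ioc (0:ℝ) x, ∑ k, ‖g i k (t + s)‖ * ‖f s k‖ :=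
          integral_mono hInt1 hInt2 h0
        rw [Real.norm_of_nonneg (integral_nonneg fun t => norm_nonneg _)]
        refine le_trans h1 ?_
        rw [integral_finset_sum _ (fun k _ => hsecint k)]
        refine Finset.sum_le_sum fun k _ => ?_
        rw [integral_mul_const]
        refine mul_le_mul_of_nonneg_right ?_ (norm_nonneg _)
        refine le_trans (le_of_eq (St16.setIntegral_comp_add
          (g := fun u => ‖g i k u‖) hx0.le)) ?_
        refine setIntegral_mono_set (hgint i k).norm ?_ ?_
        · exact Eventually.of_forall fun u => norm_nonneg _
        · refine HasSubset.Subset.eventuallyLE ?_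
          intro u hu
          exact ⟨by linarith [hs.1, hu.1], by linarith [hu.2, hs.2, hxr]⟩
    -- integrability of F2 on the product
    have hF2int : Integrable F2
        ((volume.restrict (Ioc (0:ℝ) r)).prod (volume.restrict (Ioc (0:ℝ) r))) := by
      have hdom : Integrable
          (fun p : ℝ × ℝ => ∑ k, ‖g i k (x + p.1)‖ * ‖f p.2 k‖)
          ((volume.restrict (Ioc (0:ℝ) r)).prod (volume.restrict (Ioc (0:ℝ) r))) :=
        integrable_finset_sum _ fun k _ =>
          ((htrans2 k).norm.mul_prod (St16.coord_int f k).norm)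
      refine hdom.mono' hF2sm.aestronglyMeasurable (Eventually.of_forall fun p => ?_)
      refine le_trans (norm_sum_le _ _) ?_
      refine Finset.sum_le_sum fun k _ => ?_
      rw [norm_mul]
      refine mul_le_mul_of_nonneg_left ?_ (norm_nonneg _)
      exact norm_indicator_le_norm_self _ _
    -- T1
    have hT1 : (∫ t in Ioc (0:ℝ) x, (S0 f) t i)
        = ∫ s in Ioc (0:ℝ) r, ∫ t in Ioc (0:ℝ) x, F (t, s) := by
      have e1 : ∫ t in Ioc (0:ℝ) x, (S0 f) t i
          = ∫ t in Ioc (0:ℝ) x, ∫ s in Ioc (0:ℝ) r, ∑ k, v0 (t + s) i k * f s k := by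
        refine integral_congr_ae ?_
        have h1 := ae_restrict_of_ae_restrict_of_subset (Ioc_subset_Ioc_right hxr) (hS0 f)
        exact h1.mono fun t ht => ht i
      have e2 : ∫ t in Ioc (0:ℝ) x, ∫ s in Ioc (0:ℝ) r, ∑ k, v0 (t + s) i k * f s k
          = ∫ t in Ioc (0:ℝ) x, ∫ s in Ioc (0:ℝ) r, F (t, s) := by
        have hmem : ∀ᵐ p : ℝ × ℝ
            ∂((volume.restrict (Ioc (0:ℝ) x)).prod (volume.restrict (Ioc (0:ℝ) r))),
            p ∈ Ioc (0:ℝ) x ×ˢ Ioc (0:ℝ) r := by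
          rw [Measure.prod_restrict]
          exact ae_restrict_mem (measurableSet_Ioc.prod measurableSet_Ioc)
        have hnotN : ∀ᵐ p : ℝ × ℝ
            ∂((volume.restrict (Ioc (0:ℝ) x)).prod (volume.restrict (Ioc (0:ℝ) r))),
            p ∉ {p : ℝ × ℝ | p.1 + p.2 ∈ N} :=
          measure_eq_zero_iff_ae_notMem.1 (St16.shear_null hNm hN0 _ _)
        have hprod : ∀ᵐ p : ℝ × ℝ
            ∂((volume.restrict (Ioc (0:ℝ) x)).prod (volume.restrict (Ioc (0:ℝ) r))),
            (∑ k, v0 (p.1 + p.2) i k * f p.2 k) = F p := by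
          filter_upwards [hmem, hnotN] with p hp1 hp2
          refine Finset.sum_congr rfl fun k _ => ?_
          have hin : p.1 + p.2 ∈ Ioc (0:ℝ) (2*r) := by
            have h3 := hp1.1; have h4 := hp1.2
            exact ⟨by linarith [h3.1, h4.1], by linarith [h3.2, h4.2, hxr]⟩
          rw [hNP _ hin hp2 i k]
        have h2 := Measure.ae_ae_of_ae_prod hprod
        refine integral_congr_ae (h2.mono fun t ht => ?_)
        exact integral_congr_ae ht
      rw [e1, e2]
      exact integral_integral_swap (f := fun t s => F (t, s)) hFint
    -- T2
    have hT2 : (∫ t in Ioc (0:ℝ) r, ∑ k, v0 (x + t) i k * (ad t k))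
        = -Complex.I * ∫ s in Ioc (0:ℝ) r, ∫ t in Ioc (0:ℝ) r, F2 (t, s) := by
      have hvN : ∀ᵐ t ∂(volume.restrict (Ioc (0:ℝ) r)), x + t ∉ N := by
        refine ae_restrict_of_ae ?_
        have h1 : volume ((fun t => x + t) ⁻¹' N) = 0 := by
          rw [measure_preimage_add]; exact hN0
        exact measure_eq_zero_iff_ae_notMem.1 h1
      have e1 : (∫ t in Ioc (0:ℝ) r, ∑ k, v0 (x + t) i k * (ad t k))
          = ∫ t in Ioc (0:ℝ) r, ∑ k, g i k (x + t)
              * (-Complex.I * ∫ s in Ioc t r, f s k) := by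
        refine integral_congr_ae ?_
        filter_upwards [hadj, ae_restrict_mem measurableSet_Ioc, hvN] with t h1 h2 h3
        refine Finset.sum_congr rfl fun k _ => ?_
        have hin : x + t ∈ Ioc (0:ℝ) (2*r) :=
          ⟨by linarith [h2.1, hx0], by linarith [h2.2, hxr]⟩
        rw [hNP _ hin h3 i k, h1 k]
      have e2 : ∫ t in Ioc (0:ℝ) r, ∑ k, g i k (x + t)
              * (-Complex.I * ∫ s in Ioc t r, f s k)
          = ∫ t in Ioc (0:ℝ) r, -Complex.I * ∫ s in Ioc (0:ℝ) r, F2 (t, s) := by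
        refine setIntegral_congr_fun measurableSet_Ioc fun t ht => ?_
        have hindint : ∀ k : Fin m₂, Integrable
            (fun s => (Ioi t).indicator (fun s => f s k) s) (volume.restrict (Ioc (0:ℝ) r)) :=
          fun k => (St16.coord_int f k).indicator measurableSet_Ioi
        have c1 : ∫ s in Ioc (0:ℝ) r, F2 (t, s)
            = ∑ k, g i k (x + t) * ∫ s in Ioc (0:ℝ) r, (Ioi t).indicator (fun s => f s k) s := by
          have heq : ∀ s, F2 (t, s) = ∑ k, g i k (x + t)
              * ((Ioi t).indicator (fun s => f s k) s) := by
            intro s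
            refine Finset.sum_congr rfl fun k _ => ?_
            rw [hindeq t s k]
          rw [integral_congr_ae (Eventually.of_forall heq),
            integral_finset_sum _ (fun k _ => (hindint k).const_mul _)]
          exact Finset.sum_congr rfl fun k _ => integral_const_mul _ _
        have c2 : ∀ k : Fin m₂,
            (∫ s in Ioc (0:ℝ) r, (Ioi t).indicator (fun s => f s k) s)
              = ∫ s in Ioc t r, f s k := by
          intro k
          rw [setIntegral_indicator measurableSet_Ioi]
          have hset : Ioc (0:ℝ) r ∩ Ioi t = Ioc t r := by
            ext s; simp only [mem_inter_iff, mem_Ioc, mem_Ioi]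
            exact ⟨fun h => ⟨h.2, h.1.2⟩, fun h => ⟨⟨lt_trans ht.1 h.1, h.2⟩, h.1⟩⟩
          rw [hset]
        rw [c1]
        rw [Finset.mul_sum]
        refine Finset.sum_congr rfl fun k _ => ?_
        rw [c2 k]
        ring
      rw [e1, e2, integral_const_mul]
      congr 1
      exact integral_integral_swap (f := fun t s => F2 (t, s)) hF2int
    -- combine
    have hP : Integrable (fun s => ∫ t in Ioc (0:ℝ) x, F (t, s))
        (volume.restrict (Ioc (0:ℝ) r)) := hFint.integral_prod_right
    have hQ : Integrable (fun s => ∫ t in Ioc (0:ℝ) r, F2 (t, s))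
        (volume.restrict (Ioc (0:ℝ) r)) := hF2int.integral_prod_right
    rw [hT1, hT2]
    have halg : ∀ P Q R : ℂ, P - Q = R →
        Complex.I * P + -Complex.I * Q = Complex.I * R := by
      intro P Q R h; rw [← h]; ring
    refine halg _ _ _ ?_
    rw [← integral_sub hP hQ]
    refine setIntegral_congr_fun measurableSet_Ioc fun s hs => ?_
    -- pointwise in s : the difference of the two inner integrals
    have hIIg : ∀ (k : Fin m₂) (a b : ℝ), 0 < a → a ≤ 2*r → 0 < b → b ≤ 2*r →
        IntervalIntegrable (g i k) volume a b := by
      intro k a b ha ha2 hb hb2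
      rw [intervalIntegrable_iff]
      refine (hgint i k).mono_set ?_
      intro u hu
      rcases _root_.Set.mem_uIoc.1 hu with ⟨h, h'⟩ | ⟨h, h'⟩ <;>
        exact ⟨by linarith, by linarith⟩
    have c1 : ∫ t in Ioc (0:ℝ) x, F (t, s)
        = ∑ k, (∫ u in Ioc s (x+s), g i k u) * f s k := by
      have heq : ∀ t, F (t, s) = ∑ k, g i k (t + s) * f s k := fun t => rfl
      rw [integral_congr_ae (Eventually.of_forall heq),
        integral_finset_sum _ (fun k _ => (hsection s hs k).mul_const _)]
      refine Finset.sum_congr rfl fun k _ => ?_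
      rw [integral_mul_const]
      congr 1
      have h1 := St16.setIntegral_comp_add (g := g i k) (s := s) (a := 0) (b := x) hx0.le
      rw [zero_add] at h1
      exact h1
    have c2 : ∫ t in Ioc (0:ℝ) r, F2 (t, s)
        = ∑ k, (∫ u in Ioc x (x+s), g i k u) * f s k := by
      have heq : ∀ t, F2 (t, s)
          = ∑ k, (Iio s).indicator (fun t => g i k (x + t) * f s k) t := by
        intro t
        refine Finset.sum_congr rfl fun k _ => ?_
        by_cases h : t < s
        · simp [Set.indicator_apply, mem_setOf_eq, mem_Iio, h]
        · simp [Set.indicator_apply, mem_setOf_eq, mem_Iio, h]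
      rw [integral_congr_ae (Eventually.of_forall heq),
        integral_finset_sum _ (fun k _ =>
          ((htrans2 k).mul_const _).indicator measurableSet_Iio)]
      refine Finset.sum_congr rfl fun k _ => ?_
      rw [setIntegral_indicator measurableSet_Iio]
      have hset : Ioc (0:ℝ) r ∩ Iio s = Ioo 0 s := by
        ext t; simp only [mem_inter_iff, mem_Ioc, mem_Iio, mem_Ioo]
        exact ⟨fun h => ⟨h.1.1, h.2⟩, fun h => ⟨⟨h.1, le_trans h.2.le hs.2⟩, h.2⟩⟩
      rw [hset, ← integral_Ioc_eq_integral_Ioo, integral_mul_const]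
      congr 1
      have h2 : ∫ t in Ioc (0:ℝ) s, g i k (x + t) = ∫ t in Ioc (0:ℝ) s, g i k (t + x) :=
        setIntegral_congr_fun measurableSet_Ioc (fun t _ => by
          show g i k (x + t) = g i k (t + x); rw [add_comm])
      rw [h2]
      have h1 := St16.setIntegral_comp_add (g := g i k) (s := x) (a := 0) (b := s) hs.1.le
      rw [zero_add, add_comm s x] at h1
      exact h1
    rw [c1, c2, ← Finset.sum_sub_distrib]
    refine Finset.sum_congr rfl fun k _ => ?_
    rw [← sub_mul]
    congr 1
    have hs0 : 0 < s := hs.1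
    have hsr : s ≤ r := hs.2
    have h1 : ∫ u in Ioc s (x+s), g i k u = ∫ u in s..(x+s), g i k u :=
      (intervalIntegral.integral_of_le (by linarith)).symm
    have h2 : ∫ u in Ioc x (x+s), g i k u = ∫ u in x..(x+s), g i k u :=
      (intervalIntegral.integral_of_le (by linarith)).symm
    have h3 : (∫ u in s..x, g i k u) + ∫ u in x..(x+s), g i k u
        = ∫ u in s..(x+s), g i k u :=
      intervalIntegral.integral_add_adjacent_intervals
        (hIIg k s x hs0 (by linarith) hx0 (by linarith))
        (hIIg k x (x+s) hx0 (by linarith) (by linarith) (by linarith))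
    have h4 : ∫ u in s..x, v0 u i k = ∫ u in s..x, g i k u := by
      refine intervalIntegral.integral_congr_ae ?_
      rw [ae_iff]
      refine measure_mono_null ?_ (hD0 i k)
      intro u hu
      rw [mem_setOf_eq, Classical.not_imp] at hu
      refine ⟨hu.2, ?_⟩
      have h5 : u ∈ _root_.Set.uIoc s x := hu.1
      rcases _root_.Set.mem_uIoc.1 h5 with ⟨h, h'⟩ | ⟨h, h'⟩ <;>
        exact ⟨by linarith, by linarith⟩
    rw [h4, h1, h2, ← h3]
    ring
  -- put everything together
  rw [ContinuousLinearMap.add_apply, ContinuousLinearMap.comp_apply,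
    ContinuousLinearMap.comp_apply, ContinuousLinearMap.smul_apply]
  refine Lp.ext ?_
  filter_upwards [Lp.coeFn_add (𝒜 (S0 f)) (S0 ad), Lp.coeFn_smul Complex.I (M f),
    h𝒜 (S0 f), hS0 ad, hM f, ae_restrict_mem measurableSet_Ioc]
    with x hadd hsmul h1 h2 h3 hxmem
  rw [hadd, hsmul]
  ext i
  have lhs : (𝒜 (S0 f) x + (S0 ad) x) i = 𝒜 (S0 f) x i + (S0 ad) x i := rfl
  have rhs : (Complex.I • (M f) x) i = Complex.I * (M f) x i := rfl
  show (𝒜 (S0 f) x + (S0 ad) x) i = (Complex.I • (M f) x) i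
  rw [lhs, rhs, h1 i, h2 i, h3 i]
  exact main x hxmem i
end
end

section
/- For every λ in the open upper half-plane ℂ₊, the quadratic equation ζ² + (1/λ + 2)ζ + 1 = 0 has two roots ζ₁, ζ₂ with ζ₁ζ₂ = 1, neither root has modulus 1, and exactly one of the roots lies in the open unit disc |ζ| < 1. -/
open Complex

/-- from Example 2.3: for `λ ∈ ℂ₊`, the quadratic
`ζ² + (1/λ + 2)ζ + 1 = 0` has two distinct roots with product `1`, neither of
modulus `1`, and exactly one of them lies in the open unit disc. -/
theorem statement19 (lam : ℂ) (hlam : 0 < lam.im) :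
    ∃ ζ₁ ζ₂ : ℂ,
      ζ₁ ≠ ζ₂ ∧
      ζ₁ ^ 2 + (1 / lam + 2) * ζ₁ + 1 = 0 ∧
      ζ₂ ^ 2 + (1 / lam + 2) * ζ₂ + 1 = 0 ∧
      (∀ ζ : ℂ, ζ ^ 2 + (1 / lam + 2) * ζ + 1 = 0 → ζ = ζ₁ ∨ ζ = ζ₂) ∧
      ζ₁ * ζ₂ = 1 ∧
      ‖ζ₁‖ ≠ 1 ∧ ‖ζ₂‖ ≠ 1 ∧
      Xor' (‖ζ₁‖ < 1) (‖ζ₂‖ < 1) := by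
  have hlam0 : lam ≠ 0 := by
    intro h
    rw [h] at hlam
    simp at hlam
  set b : ℂ := 1 / lam + 2 with hbdef
  have hnsq : 0 < Complex.normSq lam := Complex.normSq_pos.mpr hlam0
  have hbim : b.im < 0 := by
    have : b.im = -lam.im / Complex.normSq lam := by
      rw [hbdef]
      simp [Complex.add_im, one_div, Complex.inv_im]
    rw [this]
    exact div_neg_of_neg_of_pos (by linarith) hnsq
  -- key: any root has abs ≠ 1
  have key : ∀ ζ : ℂ, ζ ^ 2 + b * ζ + 1 = 0 → ‖ζ‖ ≠ 1 := by
    intro ζ hζ habs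
    have hζ0 : ζ ≠ 0 := by
      intro h; rw [h] at habs; simp at habs
    have hnormSq : Complex.normSq ζ = 1 := by
      rw [Complex.normSq_eq_norm_sq, habs]; norm_num
    have hconj : (starRingEnd ℂ) ζ * ζ = 1 := by
      rw [mul_comm, Complex.mul_conj, hnormSq]; norm_num
    have hcz : (starRingEnd ℂ) ζ = ζ⁻¹ := eq_inv_of_mul_eq_one_left hconj
    have h3 : ζ + b + (starRingEnd ℂ) ζ = 0 := by
      rw [hcz]
      field_simp
      linear_combination hζ
    have h4 := congrArg Complex.im h3
    simp only [Complex.add_im, Complex.conj_im, Complex.zero_im] at h4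
    linarith
  obtain ⟨s, hs⟩ := IsAlgClosed.exists_pow_nat_eq (b ^ 2 - 4) (n := 2) (by norm_num)
  have hs0 : s ≠ 0 := by
    intro h
    rw [h] at hs
    have hfac : (b - 2) * (b + 2) = 0 := by linear_combination -hs
    rcases mul_eq_zero.mp hfac with h' | h'
    · have : b = 2 := by linear_combination h'
      rw [this] at hbim; simp at hbim
    · have : b = -2 := by linear_combination h'
      rw [this] at hbim; simp at hbim
  refine ⟨(-b + s) / 2, (-b - s) / 2, ?_, ?_, ?_, ?_, ?_, ?_, ?_, ?_⟩
  · intro h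
    apply hs0
    have : s * 2 = 0 := by linear_combination 2 * h
    simpa using this
  · linear_combination hs / 4
  · linear_combination hs / 4
  · intro ζ hζ
    have hfac : (ζ - (-b + s) / 2) * (ζ - (-b - s) / 2) = 0 := by
      linear_combination hζ - hs / 4
    rcases mul_eq_zero.mp hfac with h' | h'
    · left; exact sub_eq_zero.mp h'
    · right; exact sub_eq_zero.mp h'
  · linear_combination -hs / 4
  · exact key _ (by linear_combination hs / 4)
  · exact key _ (by linear_combination hs / 4)
  · have h1 := key _ (show ((-b + s)/2) ^ 2 + b * ((-b + s)/2) + 1 = 0 by linear_combination hs / 4)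
    have h2 := key _ (show ((-b - s)/2) ^ 2 + b * ((-b - s)/2) + 1 = 0 by linear_combination hs / 4)
    have hprod : ‖(-b + s)/2‖ * ‖(-b - s)/2‖ = 1 := by
      rw [← norm_mul]
      have : ((-b + s)/2) * ((-b - s)/2) = 1 := by linear_combination -hs / 4
      rw [this]; simp
    set a1 := ‖(-b + s)/2‖
    set a2 := ‖(-b - s)/2‖
    have ha1 : 0 ≤ a1 := norm_nonneg _
    have ha2 : 0 ≤ a2 := norm_nonneg _
    rcases lt_trichotomy a1 1 with h | h | h
    · left
      exact ⟨h, by intro hlt; nlinarith⟩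
    · exact absurd h h1
    · right
      refine ⟨by nlinarith, by linarith⟩
end
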